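/- arXiv:2506.19562 — 3 statements merged into one kernel-verified Lean document; each statement's English description precedes it below -/
import Mathlib

section
/- Let f : ℍ → ℍ be a hyperbolic holomorphic self-map of the right half-plane with Denjoy–Wolff point ∞. Then for any z, w ∈ ℍ the sequence {d_ℍ(w, f^n(z))} is eventually strictly increasing: there exists N such that d_ℍ(w, f^n(z)) < d_ℍ(w, f^{n+1}(z)) for all n ≥ N. -/
open Complex Filter Topology
open Metric Set

/-- Pseudo-hyperbolic distance on the right half-plane ℍ = {Re z > 0}. -/
noncomputable def rhoH (z w : ℂ) : ℝ := ‖(z - w) / (z + (starRingEnd ℂ) w)‖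

/-- Hyperbolic distance on the right half-plane. -/
noncomputable def dH (z w : ℂ) : ℝ := (1/2) * Real.log ((1 + rhoH z w) / (1 - rhoH z w))

/-- `p` is a hyperbolic projection of `z` onto the curve `γ : [0,∞) → ℍ`. -/
def IsProjH (γ : ℝ → ℂ) (z p : ℂ) : Prop :=
  (∃ t ≥ (0:ℝ), p = γ t) ∧ ∀ t ≥ (0:ℝ), dH z p ≤ dH z (γ t)

/-- `f` is a hyperbolic holomorphic self-map of the right half-plane with
Denjoy–Wolff point ∞: it preserves ℍ, is holomorphic on ℍ, its iterates tend to ∞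
uniformly on compact subsets of ℍ, and `f(z)/z → c` for some `c > 1` as `z → ∞`
within every sector `{|arg z| < φ}`, `φ ∈ (0, π/2)`. -/
def HyperbolicAtInf (f : ℂ → ℂ) : Prop :=
  (∀ z : ℂ, 0 < z.re → 0 < (f z).re) ∧
  DifferentiableOn ℂ f {z : ℂ | 0 < z.re} ∧
  (∀ K : Set ℂ, K ⊆ {z : ℂ | 0 < z.re} → IsCompact K →
    ∀ M : ℝ, ∃ N : ℕ, ∀ n ≥ N, ∀ z ∈ K, M < ‖f^[n] z‖) ∧
  (∃ c : ℝ, 1 < c ∧ ∀ φ ∈ Set.Ioo (0:ℝ) (Real.pi/2), ∀ ε > (0:ℝ), ∃ R : ℝ,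
    ∀ z : ℂ, 0 < z.re → |z.arg| < φ → R < ‖z‖ →
      ‖f z / z - (c:ℂ)‖ < ε)

lemma normSq_diff (a b : ℂ) :
    Complex.normSq (a + (starRingEnd ℂ) b) - Complex.normSq (a - b) = 4 * a.re * b.re := by
  simp [Complex.normSq_apply, Complex.add_re, Complex.add_im, Complex.sub_re, Complex.sub_im,
    Complex.conj_re, Complex.conj_im]
  ring

lemma abs_add_conj_pos {a b : ℂ} (ha : 0 < a.re) (hb : 0 < b.re) :
    0 < ‖a + (starRingEnd ℂ) b‖ := by
  rw [norm_pos_iff]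
  intro h
  have : (a + (starRingEnd ℂ) b).re = 0 := by rw [h]; simp
  simp [Complex.add_re, Complex.conj_re] at this
  linarith

lemma abs_sub_lt {a b : ℂ} (ha : 0 < a.re) (hb : 0 < b.re) :
    ‖a - b‖ < ‖a + (starRingEnd ℂ) b‖ := by
  have h := normSq_diff a b
  have h4 : 0 < 4 * a.re * b.re := by positivity
  have : Complex.normSq (a - b) < Complex.normSq (a + (starRingEnd ℂ) b) := by linarith
  have := Real.sqrt_lt_sqrt (Complex.normSq_nonneg _) this
  simpa [Complex.norm_def] using this

lemma rhoH_eq (a b : ℂ) : rhoH a b = ‖a - b‖ / ‖a + (starRingEnd ℂ) b‖ := by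
  simp [rhoH, map_div₀]

lemma rhoH_lt_one {a b : ℂ} (ha : 0 < a.re) (hb : 0 < b.re) : rhoH a b < 1 := by
  rw [rhoH_eq, div_lt_one (abs_add_conj_pos ha hb)]
  exact abs_sub_lt ha hb

lemma rhoH_nonneg (a b : ℂ) : 0 ≤ rhoH a b := norm_nonneg _

/-- key formula: dH w u = log(A+B) - (1/2) log (4 w.re u.re), A = |w+ū|, B = |w-u| -/
lemma dH_formula {u w : ℂ} (hw : 0 < w.re) (hu : 0 < u.re) :
    dH w u = Real.log (‖w + (starRingEnd ℂ) u‖ + ‖w - u‖)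
      - (1/2) * Real.log (4 * w.re * u.re) := by
  set A := ‖w + (starRingEnd ℂ) u‖ with hA
  set B := ‖w - u‖ with hB
  have hApos : 0 < A := abs_add_conj_pos hw hu
  have hBA : B < A := abs_sub_lt hw hu
  have hBnn : 0 ≤ B := norm_nonneg _
  have hABpos : 0 < A + B := by linarith
  have hABpos' : 0 < A - B := by linarith
  have hsq : A ^ 2 - B ^ 2 = 4 * w.re * u.re := by
    have := normSq_diff w u
    rw [← Complex.sq_norm, ← Complex.sq_norm] at this
    exact this
  have hr : rhoH w u = B / A := rhoH_eq w u
  have h1 : (1 + rhoH w u) / (1 - rhoH w u) = (A + B) / (A - B) := by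
    rw [hr]
    field_simp
  have h2 : (A + B) / (A - B) = (A + B)^2 / (4 * w.re * u.re) := by
    rw [← hsq]
    have : A ^ 2 - B ^ 2 = (A - B) * (A + B) := by ring
    rw [this]
    field_simp
  rw [dH, h1, h2, Real.log_div (pow_ne_zero _ hABpos.ne') (by positivity), Real.log_pow]
  push_cast
  ring

lemma add_conj_ne_zero {a b : ℂ} (ha : 0 < a.re) (hb : 0 < b.re) :
    a + (starRingEnd ℂ) b ≠ 0 := by
  intro h
  have := abs_add_conj_pos ha hb
  rw [h] at this; simp at this

lemma rhoH_symm (a b : ℂ) : rhoH a b = rhoH b a := by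
  rw [rhoH_eq, rhoH_eq]
  congr 1
  · exact norm_sub_rev a b
  · rw [← Complex.norm_conj, map_add]; simp [add_comm]

/-- Schwarz–Pick for the right half-plane. -/
theorem schwarzPickH {f : ℂ → ℂ} (h1 : ∀ z : ℂ, 0 < z.re → 0 < (f z).re)
    (h2 : DifferentiableOn ℂ f {z : ℂ | 0 < z.re}) {a b : ℂ} (ha : 0 < a.re) (hb : 0 < b.re) :
    rhoH (f a) (f b) ≤ rhoH a b := by
  set ca := (starRingEnd ℂ) a with hca
  set S : ℂ → ℂ := fun ζ => (a + ca * ζ) / (1 - ζ) with hS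
  set T : ℂ → ℂ := fun u => (u - f a) / (u + (starRingEnd ℂ) (f a)) with hT
  have hfa : 0 < (f a).re := h1 a ha
  -- denominators
  have hden1 : ∀ ζ : ℂ, ζ ∈ ball (0:ℂ) 1 → (1:ℂ) - ζ ≠ 0 := by
    intro ζ hζ h
    rw [mem_ball_zero_iff] at hζ
    have : ζ = 1 := by linear_combination -h
    rw [this] at hζ; norm_num at hζ
  -- S maps ball into half-plane
  have hSre : ∀ ζ : ℂ, ζ ∈ ball (0:ℂ) 1 → 0 < (S ζ).re := by
    intro ζ hζ
    have hd := hden1 ζ hζ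
    have hnz : Complex.normSq (1 - ζ) ≠ 0 := by
      simpa [Complex.normSq_eq_zero] using hd
    have hζ1 : Complex.normSq ζ < 1 := by
      rw [mem_ball_zero_iff] at hζ
      nlinarith [Complex.sq_norm ζ, norm_nonneg ζ]
    have key : (S ζ).re = a.re * (1 - Complex.normSq ζ) / Complex.normSq (1 - ζ) := by
      rw [hS]
      simp only [Complex.div_re, Complex.add_re, Complex.add_im, Complex.mul_re, Complex.mul_im,
        Complex.sub_re, Complex.sub_im, Complex.one_re, Complex.one_im, hca,
        Complex.conj_re, Complex.conj_im, Complex.normSq_apply]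
      field_simp
      ring
    rw [key]
    have hpos : 0 < Complex.normSq (1 - ζ) := lt_of_le_of_ne (Complex.normSq_nonneg _) (Ne.symm hnz)
    exact div_pos (mul_pos ha (by linarith)) hpos
  -- T maps half-plane into ball
  have hTball : ∀ u : ℂ, 0 < u.re → ‖T u‖ < 1 := by
    intro u hu
    have := rhoH_lt_one hu hfa
    rwa [rhoH] at this
  -- differentiability of g = T ∘ f ∘ S on the unit ball
  set g : ℂ → ℂ := fun ζ => T (f (S ζ)) with hg
  have hSdiff : DifferentiableOn ℂ S (ball (0:ℂ) 1) := by
    apply DifferentiableOn.div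
    · exact (differentiableOn_const _).add ((differentiableOn_const _).mul differentiableOn_id)
    · exact (differentiableOn_const _).sub differentiableOn_id
    · exact hden1
  have hfSdiff : DifferentiableOn ℂ (fun ζ => f (S ζ)) (ball (0:ℂ) 1) := by
    apply h2.comp hSdiff
    intro ζ hζ
    exact hSre ζ hζ
  have hgdiff : DifferentiableOn ℂ g (ball (0:ℂ) 1) := by
    apply DifferentiableOn.div
    · exact hfSdiff.sub (differentiableOn_const _)
    · exact hfSdiff.add (differentiableOn_const _)
    · intro ζ hζ
      exact add_conj_ne_zero (h1 _ (hSre ζ hζ)) hfa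
  have hgmaps : MapsTo g (ball (0:ℂ) 1) (ball (0:ℂ) 1) := by
    intro ζ hζ
    rw [mem_ball_zero_iff]
    exact hTball _ (h1 _ (hSre ζ hζ))
  have hg0 : g 0 = 0 := by
    have : S 0 = a := by simp [hS]
    simp [hg, hT, this]
  -- the point
  set ζ₀ : ℂ := (b - a) / (b + ca) with hζ₀
  have hbden : b + ca ≠ 0 := add_conj_ne_zero hb ha
  have habs : ‖ζ₀‖ = rhoH b a := by rw [rhoH]
  have hζ₀ball : ‖ζ₀‖ < 1 := by rw [habs]; exact rhoH_lt_one hb ha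
  have hsum : a + ca ≠ 0 := add_conj_ne_zero ha ha
  have hSζ₀ : S ζ₀ = b := by
    rw [hS, hζ₀]
    have e1 : a + ca * ((b - a) / (b + ca)) = (a * b + ca * b) / (b + ca) := by
      field_simp; ring
    have e2 : (1:ℂ) - (b - a) / (b + ca) = (a + ca) / (b + ca) := by
      field_simp
      ring
    simp only [e1, e2]
    rw [div_div_div_cancel_right₀]
    · field_simp [hsum]
    · exact hbden
  have sch := Complex.norm_le_norm_of_mapsTo_ball hgdiff (hgmaps.mono_right ball_subset_closedBall) hg0 hζ₀ball
  have hgb : g ζ₀ = T (f b) := by rw [hg]; simp only []; rw [hSζ₀]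
  rw [hgb, habs] at sch
  have hTfb : rhoH (f b) (f a) = ‖T (f b)‖ := by rw [rhoH, hT]
  rw [rhoH_symm (f a) (f b), rhoH_symm a b, hTfb]
  exact sch

/-- f x / x → c along the positive real axis. -/
lemma tendsto_real_ratio {f : ℂ → ℂ} {c : ℝ}
    (hcond : ∀ φ ∈ Set.Ioo (0:ℝ) (Real.pi/2), ∀ ε > (0:ℝ), ∃ R : ℝ,
      ∀ z : ℂ, 0 < z.re → |z.arg| < φ → R < ‖z‖ →
        ‖(f z / z - (c:ℂ))‖ < ε) :
    Tendsto (fun x : ℝ => f x / x) atTop (𝓝 (c:ℂ)) := by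
  rw [Metric.tendsto_atTop]
  intro ε hε
  have hφ : Real.pi / 4 ∈ Set.Ioo (0:ℝ) (Real.pi/2) := by
    constructor
    · positivity
    · linarith [Real.pi_pos]
  obtain ⟨R, hR⟩ := hcond _ hφ ε hε
  refine ⟨max (R + 1) 1, fun x hx => ?_⟩
  have hx1 : (1:ℝ) ≤ x := le_trans (le_max_right _ _) hx
  have hxR : R < x := by
    have := le_trans (le_max_left _ _) hx
    linarith
  have hxpos : (0:ℝ) < x := by linarith
  have h1 : (0:ℝ) < (x:ℂ).re := by simpa using hxpos
  have h2 : |(x:ℂ).arg| < Real.pi / 4 := by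
    rw [Complex.arg_ofReal_of_nonneg hxpos.le]
    simpa using hφ.1
  have h3 : R < ‖(x:ℂ)‖ := by
    rwa [Complex.norm_real, Real.norm_eq_abs, abs_of_pos hxpos]
  have := hR x h1 h2 h3
  rwa [Complex.dist_eq]

lemma tendsto_normSq_ratio (v : ℂ) :
    Tendsto (fun x : ℝ => Complex.normSq (v + x) / x^2) atTop (𝓝 1) := by
  have h0 : Tendsto (fun x : ℝ => x⁻¹) atTop (𝓝 0) := tendsto_inv_atTop_zero
  have hre : Tendsto (fun x : ℝ => v.re * x⁻¹) atTop (𝓝 0) := by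
    simpa using h0.const_mul v.re
  have him : Tendsto (fun x : ℝ => v.im * x⁻¹) atTop (𝓝 0) := by
    simpa using h0.const_mul v.im
  have key : Tendsto (fun x : ℝ => (v.re * x⁻¹ + 1)^2 + (v.im * x⁻¹)^2) atTop (𝓝 1) := by
    have := ((hre.add (tendsto_const_nhds : Tendsto (fun _ : ℝ => (1:ℝ)) atTop (𝓝 1))).pow 2).add
      (him.pow 2)
    simpa using this
  apply key.congr'
  filter_upwards [eventually_gt_atTop (0:ℝ)] with x hx
  have hx' : x ≠ 0 := ne_of_gt hx
  rw [Complex.normSq_apply]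
  simp only [Complex.add_re, Complex.add_im, Complex.ofReal_re, Complex.ofReal_im]
  field_simp
  ring

/-- Julia's inequality at ∞. -/
theorem juliaH {f : ℂ → ℂ} {c : ℝ} (h1 : ∀ z : ℂ, 0 < z.re → 0 < (f z).re)
    (h2 : DifferentiableOn ℂ f {z : ℂ | 0 < z.re}) (hc : 1 < c)
    (hcond : ∀ φ ∈ Set.Ioo (0:ℝ) (Real.pi/2), ∀ ε > (0:ℝ), ∃ R : ℝ,
      ∀ z : ℂ, 0 < z.re → |z.arg| < φ → R < ‖z‖ →
        ‖(f z / z - (c:ℂ))‖ < ε)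
    {u : ℂ} (hu : 0 < u.re) : c * u.re ≤ (f u).re := by
  have hc0 : (0:ℝ) < c := by linarith
  set fu := f u with hfu
  have hfure : 0 < fu.re := h1 u hu
  set P : ℝ → ℝ := fun x => 4 * u.re * (x^2 / Complex.normSq (u + x)) with hP
  set Q : ℝ → ℝ := fun x => 4 * fu.re * ((f x).re / x) *
      (x^2 / Complex.normSq (fu + (starRingEnd ℂ) (f x))) with hQ
  -- pointwise inequality
  have hPQ : ∀ᶠ x : ℝ in atTop, P x ≤ Q x := by
    filter_upwards [eventually_gt_atTop (0:ℝ)] with x hx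
    have hxre : (0:ℝ) < (x:ℂ).re := by simpa using hx
    have hfxre : 0 < (f x).re := h1 _ hxre
    have hNS1 : 0 < Complex.normSq (u + x) := by
      rw [Complex.normSq_pos]
      intro h
      have : (u + (x:ℂ)).re = 0 := by rw [h]; simp
      simp [Complex.add_re] at this
      linarith
    have hNS2 : 0 < Complex.normSq (fu + (starRingEnd ℂ) (f x)) := by
      rw [Complex.normSq_pos]
      exact add_conj_ne_zero hfure hfxre
    -- ρ² formulas
    have hrho1 : (rhoH u x)^2 = Complex.normSq (u - x) / Complex.normSq (u + x) := by
      rw [rhoH, Complex.sq_norm, Complex.normSq_div, Complex.conj_ofReal]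
    have hrho2 : (rhoH fu (f x))^2
        = Complex.normSq (fu - f x) / Complex.normSq (fu + (starRingEnd ℂ) (f x)) := by
      rw [rhoH, Complex.sq_norm, Complex.normSq_div]
    have hd1 : Complex.normSq (u + x) - Complex.normSq (u - x) = 4 * u.re * x := by
      have := normSq_diff u (x:ℂ)
      rw [Complex.conj_ofReal] at this
      simpa using this
    have hd2 : Complex.normSq (fu + (starRingEnd ℂ) (f x)) - Complex.normSq (fu - f x)
        = 4 * fu.re * (f x).re := normSq_diff fu (f x)
    have e1 : 1 - Complex.normSq (u - x) / Complex.normSq (u + x)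
        = 4 * u.re * x / Complex.normSq (u + x) := by
      rw [eq_div_iff hNS1.ne', sub_mul, div_mul_cancel₀ _ hNS1.ne', ← hd1]; ring
    have e2 : 1 - Complex.normSq (fu - f x) / Complex.normSq (fu + (starRingEnd ℂ) (f x))
        = 4 * fu.re * (f x).re / Complex.normSq (fu + (starRingEnd ℂ) (f x)) := by
      rw [eq_div_iff hNS2.ne', sub_mul, div_mul_cancel₀ _ hNS2.ne', ← hd2]; ring
    have hPx : P x = x * (1 - (rhoH u x)^2) := by
      rw [hP, hrho1, e1]
      field_simp
    have hQx : Q x = x * (1 - (rhoH fu (f x))^2) := by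
      rw [hQ, hrho2, e2]
      field_simp
    rw [hPx, hQx]
    have hsp : rhoH fu (f x) ≤ rhoH u x := schwarzPickH h1 h2 hu hxre
    have : (rhoH fu (f x))^2 ≤ (rhoH u x)^2 :=
      pow_le_pow_left₀ (rhoH_nonneg _ _) hsp 2
    nlinarith
  -- limits
  have hTP : Tendsto P atTop (𝓝 (4 * u.re)) := by
    have h := tendsto_normSq_ratio u
    have h2' : Tendsto (fun x : ℝ => x^2 / Complex.normSq (u + x)) atTop (𝓝 1) := by
      have := h.inv₀ (by norm_num)
      simp only [inv_one] at this
      apply this.congr'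
      filter_upwards [eventually_gt_atTop (0:ℝ)] with x hx
      rw [inv_div]
    simpa using (h2'.const_mul (4 * u.re))
  have hq := tendsto_real_ratio hcond
  have hTQ : Tendsto Q atTop (𝓝 (4 * fu.re * c * (c^2)⁻¹)) := by
    -- (f x).re / x → c
    have hre : Tendsto (fun x : ℝ => (f x).re / x) atTop (𝓝 c) := by
      have := (Complex.continuous_re.tendsto _).comp hq
      simp only [Complex.ofReal_re] at this
      apply this.congr'
      filter_upwards [eventually_gt_atTop (0:ℝ)] with x hx
      simp [Complex.div_ofReal_re]
    -- normSq (fu + conj (f x)) / x² → c²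
    have hns : Tendsto (fun x : ℝ => Complex.normSq (fu + (starRingEnd ℂ) (f x)) / x^2)
        atTop (𝓝 (c^2)) := by
      have habs : Tendsto (fun x : ℝ => ‖(x:ℂ)‖) atTop atTop := by
        apply tendsto_atTop_mono' _ _ tendsto_id
        filter_upwards [eventually_ge_atTop (0:ℝ)] with x hx
        rw [Complex.norm_real, Real.norm_eq_abs, _root_.abs_of_nonneg hx]
        exact le_refl _
      have hinv : Tendsto (fun x : ℝ => fu / (x:ℂ)) atTop (𝓝 0) := by
        rw [tendsto_zero_iff_norm_tendsto_zero]
        have : Tendsto (fun x : ℝ => ‖fu‖ * (‖(x:ℂ)‖)⁻¹) atTop (𝓝 0) := by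
          simpa using (habs.inv_tendsto_atTop).const_mul ‖fu‖
        apply this.congr
        intro x
        simp [norm_div]
        ring
      have hconj : Tendsto (fun x : ℝ => (starRingEnd ℂ) (f x / x)) atTop (𝓝 ((starRingEnd ℂ) (c:ℂ))) :=
        (Complex.continuous_conj.tendsto _).comp hq
      have hsum : Tendsto (fun x : ℝ => fu / x + (starRingEnd ℂ) (f x / x)) atTop (𝓝 (c:ℂ)) := by
        have := hinv.add hconj
        simpa [Complex.conj_ofReal] using this
      have hnorm : Tendsto (fun x : ℝ => Complex.normSq (fu / x + (starRingEnd ℂ) (f x / x)))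
          atTop (𝓝 (Complex.normSq (c:ℂ))) :=
        (Complex.continuous_normSq.tendsto _).comp hsum
      have hcsq : Complex.normSq (c:ℂ) = c^2 := by
        rw [Complex.normSq_ofReal]; ring
      rw [hcsq] at hnorm
      apply hnorm.congr'
      filter_upwards [eventually_gt_atTop (0:ℝ)] with x hx
      have hx' : (x:ℂ) ≠ 0 := by
        simpa using ne_of_gt hx
      rw [show fu / x + (starRingEnd ℂ) (f x / x) = (fu + (starRingEnd ℂ) (f x)) / x by
        rw [map_div₀, Complex.conj_ofReal, ← add_div]]
      rw [Complex.normSq_div, Complex.normSq_ofReal]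
      ring
    have hfrac : Tendsto (fun x : ℝ => x^2 / Complex.normSq (fu + (starRingEnd ℂ) (f x)))
        atTop (𝓝 ((c^2)⁻¹)) := by
      have := hns.inv₀ (by positivity)
      apply this.congr'
      filter_upwards [] with x
      rw [inv_div]
    have := (hre.const_mul (4 * fu.re)).mul hfrac
    exact this
  -- conclude
  have hle : 4 * u.re ≤ 4 * fu.re * c * (c^2)⁻¹ := le_of_tendsto_of_tendsto hTP hTQ hPQ
  have : 4 * fu.re * c * (c^2)⁻¹ = 4 * fu.re / c := by
    field_simp
  rw [this] at hle
  rw [le_div_iff₀ hc0] at hle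
  nlinarith [hle]

lemma abs_flip (w v : ℂ) :
    ‖w + (starRingEnd ℂ) v‖ = ‖v + (starRingEnd ℂ) w‖ := by
  rw [← Complex.norm_conj, map_add, Complex.conj_conj, add_comm]

lemma dH_formula' {u w : ℂ} (hw : 0 < w.re) (hu : 0 < u.re) :
    dH w u = Real.log (‖u + (starRingEnd ℂ) w‖ + ‖u - w‖)
      - (1/2) * Real.log (4 * w.re * u.re) := by
  rw [dH_formula hw hu, abs_flip, norm_sub_rev]

/-- for a hyperbolic self-map of the right half-plane with Denjoy–Wolff
point ∞, the distance from any point to the orbit is eventually strictly increasing. -/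
theorem stmt3 (f : ℂ → ℂ) (hf : HyperbolicAtInf f)
    (z : ℂ) (hz : 0 < z.re) (w : ℂ) (hw : 0 < w.re) :
    ∃ N : ℕ, ∀ n ≥ N, dH w (f^[n] z) < dH w (f^[n+1] z) := by
  obtain ⟨h1, h2, h3, c, hc, hcond⟩ := hf
  have hc0 : (0:ℝ) < c := by linarith
  set u : ℕ → ℂ := fun n => f^[n] z with hudef
  have hsucc : ∀ n, u (n+1) = f (u n) := by
    intro n; simp [hudef, Function.iterate_succ_apply']
  have hu : ∀ n, 0 < (u n).re := by
    intro n
    induction n with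
    | zero => simpa [hudef] using hz
    | succ n ih => rw [hsucc]; exact h1 _ ih
  have hune : ∀ n, u n ≠ 0 := by
    intro n h
    have := hu n
    rw [h] at this; simp at this
  have hjulia : ∀ n, c * (u n).re ≤ (u (n+1)).re := by
    intro n
    rw [hsucc]
    exact juliaH h1 h2 hc hcond (hu n)
  have hgrow : ∀ n, z.re ≤ (u n).re := by
    intro n
    induction n with
    | zero => simp [hudef]
    | succ n ih =>
      have := hjulia n
      nlinarith
  -- |u n| → ∞
  have habs_top : Tendsto (fun n => ‖u n‖) atTop atTop := by
    rw [Filter.tendsto_atTop]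
    intro M
    obtain ⟨N, hN⟩ := h3 {z} (by intro x hx; rw [Set.mem_singleton_iff] at hx; subst hx; exact hz)
      isCompact_singleton M
    rw [eventually_atTop]
    exact ⟨N, fun n hn => (hN n hn z rfl).le⟩
  -- consecutive pseudo-hyperbolic distance bounded
  set ρ₀ : ℝ := rhoH (u 1) (u 0) with hρ₀
  have hρ₀1 : ρ₀ < 1 := rhoH_lt_one (hu 1) (hu 0)
  have hρ₀0 : 0 ≤ ρ₀ := rhoH_nonneg _ _
  have hrho : ∀ n, rhoH (u (n+1)) (u n) ≤ ρ₀ := by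
    intro n
    induction n with
    | zero => exact le_refl _
    | succ n ih =>
      calc rhoH (u (n+2)) (u (n+1)) = rhoH (f (u (n+1))) (f (u n)) := by rw [hsucc, hsucc]
        _ ≤ rhoH (u (n+1)) (u n) := schwarzPickH h1 h2 (hu (n+1)) (hu n)
        _ ≤ ρ₀ := ih
  set M : ℝ := 2 * ρ₀ / (1 - ρ₀) with hM
  have hM0 : 0 ≤ M := by
    apply div_nonneg (by linarith) (by linarith)
  have hdiff : ∀ n, ‖u (n+1) - u n‖ ≤ M * (u n).re := by
    intro n
    have h := hrho n
    rw [rhoH_eq] at h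
    have hden : 0 < ‖u (n+1) + (starRingEnd ℂ) (u n)‖ :=
      abs_add_conj_pos (hu (n+1)) (hu n)
    rw [div_le_iff₀ hden] at h
    have htri : ‖u (n+1) + (starRingEnd ℂ) (u n)‖
        ≤ ‖u (n+1) - u n‖ + 2 * (u n).re := by
      have : u (n+1) + (starRingEnd ℂ) (u n) = (u (n+1) - u n) + (u n + (starRingEnd ℂ) (u n)) := by
        ring
      rw [this]
      refine (norm_add_le _ _).trans ?_
      rw [Complex.add_conj]
      rw [Complex.norm_real, Real.norm_eq_abs, _root_.abs_of_pos (by linarith [hu n] : (0:ℝ) < 2 * (u n).re)]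
    have h2' : ‖u (n+1) - u n‖ ≤ ρ₀ * (‖u (n+1) - u n‖ + 2 * (u n).re) := by
      calc ‖u (n+1) - u n‖ ≤ ρ₀ * ‖u (n+1) + (starRingEnd ℂ) (u n)‖ := h
        _ ≤ ρ₀ * (‖u (n+1) - u n‖ + 2 * (u n).re) :=
          mul_le_mul_of_nonneg_left htri hρ₀0
    rw [hM, show 2 * ρ₀ / (1 - ρ₀) * (u n).re = 2 * ρ₀ * (u n).re / (1 - ρ₀) by ring,
      le_div_iff₀ (by linarith)]
    nlinarith
  -- sector bound |u n| ≤ C * Re (u n)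
  set C : ℝ := ‖z‖ / z.re + M / (c - 1) with hC
  have hC1 : 1 ≤ C := by
    have h1' : (1:ℝ) ≤ ‖z‖ / z.re := by
      rw [le_div_iff₀ hz]
      simpa using Complex.re_le_norm z
    have h2' : 0 ≤ M / (c - 1) := div_nonneg hM0 (by linarith)
    rw [hC]; linarith
  have hC0 : 0 < C := by linarith
  have hCbound : ∀ n, ‖u n‖ ≤ C * (u n).re := by
    have key : ∀ n, ‖u n‖ ≤ ‖z‖ + M / (c - 1) * (u n).re := by
      intro n
      induction n with
      | zero =>
        have h0 : u 0 = z := by simp [hudef]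
        rw [h0]
        have h00 : 0 ≤ M / (c-1) * z.re :=
          mul_nonneg (div_nonneg hM0 (by linarith)) hz.le
        linarith
      | succ n ih =>
        have htr : ‖u (n+1)‖ ≤ ‖u n‖ + ‖u (n+1) - u n‖ := by
          calc ‖u (n+1)‖ = ‖u n + (u (n+1) - u n)‖ := by ring_nf
            _ ≤ _ := norm_add_le _ _
        have hcne : c - 1 ≠ 0 := by intro h; rw [sub_eq_zero] at h; exact absurd h.symm hc.ne
        have halg : M / (c-1) * (u n).re + M * (u n).re = M / (c-1) * (c * (u n).re) := by
          field_simp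
          ring
        have hmono : M / (c-1) * (c * (u n).re) ≤ M / (c-1) * (u (n+1)).re :=
          mul_le_mul_of_nonneg_left (hjulia n) (div_nonneg hM0 (by linarith))
        calc ‖u (n+1)‖ ≤ ‖u n‖ + ‖u (n+1) - u n‖ := htr
          _ ≤ (‖z‖ + M / (c-1) * (u n).re) + M * (u n).re := by
              linarith [hdiff n, ih]
          _ = ‖z‖ + M / (c-1) * (c * (u n).re) := by rw [← halg]; ring
          _ ≤ ‖z‖ + M / (c-1) * (u (n+1)).re := by linarith [hmono]
    intro n
    have habsz : ‖z‖ ≤ ‖z‖ / z.re * (u n).re := by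
      calc ‖z‖ = ‖z‖ / z.re * z.re := by field_simp
        _ ≤ ‖z‖ / z.re * (u n).re :=
          mul_le_mul_of_nonneg_left (hgrow n) (div_nonneg (norm_nonneg _) hz.le)
    calc ‖u n‖ ≤ ‖z‖ + M / (c - 1) * (u n).re := key n
      _ ≤ ‖z‖ / z.re * (u n).re + M / (c - 1) * (u n).re := by linarith
      _ = C * (u n).re := by rw [hC]; ring
  -- sector angle
  set φ : ℝ := Real.arccos (1 / (2 * C)) with hφ
  have h2C : (0:ℝ) < 1 / (2 * C) := by positivity
  have h2C1 : 1 / (2 * C) < 1 := by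
    rw [div_lt_one (by linarith)]
    linarith
  have hφmem : φ ∈ Set.Ioo (0:ℝ) (Real.pi / 2) := by
    constructor
    · exact Real.arccos_pos.2 h2C1
    · exact Real.arccos_lt_pi_div_two.2 h2C
  have hcosφ : Real.cos φ = 1 / (2 * C) := Real.cos_arccos (by linarith) h2C1.le
  have hsector : ∀ n, |Complex.arg (u n)| < φ := by
    intro n
    have hne := hune n
    have habspos : 0 < ‖u n‖ := by
      rwa [norm_pos_iff]
    have hcos : Real.cos (Complex.arg (u n)) = (u n).re / ‖u n‖ :=
      Complex.cos_arg hne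
    have hge : 1 / C ≤ (u n).re / ‖u n‖ := by
      rw [div_le_div_iff₀ hC0 habspos]
      linarith [hCbound n]
    by_contra hcon
    push_neg at hcon
    have hcle : Real.cos |Complex.arg (u n)| ≤ Real.cos φ :=
      Real.cos_le_cos_of_nonneg_of_le_pi hφmem.1.le (Complex.abs_arg_le_pi _) hcon
    rw [Real.cos_abs, hcos, hcosφ] at hcle
    have : 1 / (2 * C) < 1 / C := one_div_lt_one_div_of_lt hC0 (by linarith)
    linarith
  -- ratio tendsto c
  have hq : Tendsto (fun n => u (n+1) / u n) atTop (𝓝 (c:ℂ)) := by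
    rw [Metric.tendsto_atTop]
    intro ε hε
    obtain ⟨R, hR⟩ := hcond φ hφmem ε hε
    obtain ⟨N, hN⟩ := eventually_atTop.1 (Filter.tendsto_atTop.1 habs_top (R + 1))
    refine ⟨N, fun n hn => ?_⟩
    have hRn : R < ‖u n‖ := by linarith [hN n hn]
    have := hR (u n) (hu n) (hsector n) hRn
    rw [← hsucc n] at this
    rwa [Complex.dist_eq]
  -- inverse of orbit tends to 0
  have huinv : Tendsto (fun n => (u n)⁻¹) atTop (𝓝 (0:ℂ)) := by
    rw [tendsto_zero_iff_norm_tendsto_zero]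
    have hnorm : ∀ n, ‖(u n)⁻¹‖ = (‖u n‖)⁻¹ := fun n => by
      rw [norm_inv]
    simp only [hnorm]
    exact habs_top.inv_tendsto_atTop
  have habs0 : ∀ n, (0:ℝ) < ‖u n‖ := by
    intro n; rw [norm_pos_iff]; exact hune n
  set S : ℕ → ℝ := fun n => ‖u n + (starRingEnd ℂ) w‖ + ‖u n - w‖ with hS
  have hSpos : ∀ n, 0 < S n := fun n =>
    add_pos_of_pos_of_nonneg (abs_add_conj_pos (hu n) hw) (norm_nonneg _)
  have hdH : ∀ n, dH w (u n) = Real.log (S n) - (1/2) * Real.log (4 * w.re * (u n).re) :=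
    fun n => dH_formula' hw (hu n)
  -- S n / |u n| → 2
  have t1 : Tendsto (fun n => S n / ‖u n‖) atTop (𝓝 2) := by
    have ha : Tendsto (fun n => (1:ℂ) + (starRingEnd ℂ) w * (u n)⁻¹) atTop (𝓝 1) := by
      have := (huinv.const_mul ((starRingEnd ℂ) w)).const_add (1:ℂ)
      simpa using this
    have hb : Tendsto (fun n => (1:ℂ) - w * (u n)⁻¹) atTop (𝓝 1) := by
      have := (huinv.const_mul w).const_sub (1:ℂ)
      simpa using this
    have habs1 : Tendsto (fun n => ‖1 + (starRingEnd ℂ) w * (u n)⁻¹‖) atTop (𝓝 1) := by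
      have := (continuous_norm.tendsto (1:ℂ)).comp ha
      simpa [Function.comp_def] using this
    have habs2 : Tendsto (fun n => ‖1 - w * (u n)⁻¹‖) atTop (𝓝 1) := by
      have := (continuous_norm.tendsto (1:ℂ)).comp hb
      simpa [Function.comp_def] using this
    have hsum := habs1.add habs2
    norm_num at hsum
    apply hsum.congr
    intro n
    have h1' : (u n + (starRingEnd ℂ) w) / u n = 1 + (starRingEnd ℂ) w * (u n)⁻¹ := by
      field_simp [hune n]
    have h2' : (u n - w) / u n = 1 - w * (u n)⁻¹ := by
      rw [sub_div, div_self (hune n), div_eq_mul_inv]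
    rw [← h1', ← h2', norm_div, norm_div, hS]
    rw [← add_div]
  have t2 : Tendsto (fun n => ‖u (n+1)‖ / ‖u n‖) atTop (𝓝 c) := by
    have h := (continuous_norm.tendsto ((c:ℂ))).comp hq
    have hc' : ‖(c:ℂ)‖ = c := by rw [Complex.norm_real, Real.norm_eq_abs, _root_.abs_of_pos hc0]
    rw [hc'] at h
    apply h.congr
    intro n
    simp [map_div₀]
  have t1' : Tendsto (fun n => S (n+1) / ‖u (n+1)‖) atTop (𝓝 2) :=
    t1.comp (tendsto_add_atTop_nat 1)
  have tS : Tendsto (fun n => S (n+1) / S n) atTop (𝓝 c) := by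
    have h := (t1'.mul t2).div t1 (by norm_num : (2:ℝ) ≠ 0)
    have heq : (2 * c) / 2 = c := by ring
    rw [heq] at h
    apply h.congr
    intro n
    have e1 := (habs0 n).ne'
    have e2 := (habs0 (n+1)).ne'
    have e3 := (hSpos n).ne'
    show S (n+1) / ‖u (n+1)‖ * (‖u (n+1)‖ / ‖u n‖)
        / (S n / ‖u n‖) = S (n+1) / S n
    field_simp
  -- Re ratio → c
  have tqre : Tendsto (fun n => (u (n+1) / u n).re) atTop (𝓝 c) := by
    have := (Complex.continuous_re.tendsto _).comp hq
    simpa [Function.comp_def] using this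
  have tqim : Tendsto (fun n => (u (n+1) / u n).im) atTop (𝓝 0) := by
    have := (Complex.continuous_im.tendsto _).comp hq
    simpa [Function.comp_def] using this
  have hbdd : ∀ n, |(u n).im / (u n).re| ≤ C := by
    intro n
    rw [abs_div, _root_.abs_of_pos (hu n), div_le_iff₀ (hu n)]
    calc |(u n).im| ≤ ‖u n‖ := Complex.abs_im_le_norm _
      _ ≤ C * (u n).re := hCbound n
  have tzero : Tendsto (fun n => (u (n+1) / u n).im * ((u n).im / (u n).re)) atTop (𝓝 0) := by
    refine squeeze_zero_norm (a := fun n => |(u (n+1) / u n).im| * C) (fun n => ?_) ?_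
    · rw [Real.norm_eq_abs, abs_mul]
      exact mul_le_mul_of_nonneg_left (hbdd n) (abs_nonneg _)
    · have := tqim.abs.mul_const C
      simpa using this
  have tR : Tendsto (fun n => (u (n+1)).re / (u n).re) atTop (𝓝 c) := by
    have h := tqre.sub tzero
    rw [sub_zero] at h
    apply h.congr
    intro n
    have hmul : u (n+1) = (u (n+1) / u n) * u n := (div_mul_cancel₀ (u (n+1)) (hune n)).symm
    rw [show (u (n+1)).re = ((u (n+1) / u n) * u n).re from by rw [← hmul]]
    rw [Complex.mul_re]
    field_simp [(hu n).ne']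
  -- conclude via logs
  have tlogS : Tendsto (fun n => Real.log (S (n+1) / S n)) atTop (𝓝 (Real.log c)) :=
    ((Real.continuousAt_log hc0.ne').tendsto).comp tS
  have tlogR : Tendsto (fun n => Real.log ((u (n+1)).re / (u n).re)) atTop (𝓝 (Real.log c)) :=
    ((Real.continuousAt_log hc0.ne').tendsto).comp tR
  have tD : Tendsto (fun n => Real.log (S (n+1) / S n)
      - (1/2) * Real.log ((u (n+1)).re / (u n).re)) atTop
      (𝓝 (Real.log c - (1/2) * Real.log c)) :=
    tlogS.sub (tlogR.const_mul (1/2))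
  have hposL : 0 < Real.log c - (1/2) * Real.log c := by
    have := Real.log_pos hc
    linarith
  have hev := tD.eventually (eventually_gt_nhds hposL)
  obtain ⟨N, hN⟩ := eventually_atTop.1 hev
  refine ⟨N, fun n hn => ?_⟩
  have hD := hN n hn
  have e1 : Real.log (S (n+1)) - Real.log (S n) = Real.log (S (n+1) / S n) :=
    (Real.log_div (hSpos _).ne' (hSpos _).ne').symm
  have e2 : Real.log (4 * w.re * (u (n+1)).re) - Real.log (4 * w.re * (u n).re)
      = Real.log ((u (n+1)).re / (u n).re) := by
    rw [← Real.log_div (mul_pos (mul_pos (by norm_num : (0:ℝ) < 4) hw) (hu (n+1))).ne'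
      (mul_pos (mul_pos (by norm_num : (0:ℝ) < 4) hw) (hu n)).ne']
    congr 1
    field_simp [(hu n).ne']
  show dH w (u n) < dH w (u (n+1))
  rw [hdH n, hdH (n+1)]
  linarith [hD, e1, e2]
end

section
/- Let γ₁, γ₂ : [0,∞) → ℍ be two continuous curves landing at ∞ such that arg(γ₁(t)) → θ₁ and arg(γ₂(t)) → θ₂ as t → ∞, where θ₁, θ₂ ∈ (−π/2, π/2). Let {z_n} ⊂ ℍ be a sequence with |z_n| → ∞, and for each n let π_n¹ be a projection of z_n onto γ₁ and π_n² a projection of z_n onto γ₂. Then d_ℍ(π_n¹, π_n²) → d_ℍ(e^{iθ₁}, e^{iθ₂}) as n → ∞. -/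
open Complex Filter Topology

lemma rhoH_nonneg_s5 (z w : ℂ) : 0 ≤ rhoH z w := norm_nonneg _

lemma normSq_add_conj_sub (z w : ℂ) :
    Complex.normSq (z + (starRingEnd ℂ) w) - Complex.normSq (z - w) = 4 * z.re * w.re := by
  simp [Complex.normSq_apply, Complex.add_re, Complex.add_im, Complex.sub_re, Complex.sub_im]
  ring

lemma add_conj_ne_zero_s5 {z w : ℂ} (hz : 0 < z.re) (hw : 0 < w.re) :
    z + (starRingEnd ℂ) w ≠ 0 := by
  intro h
  have : (z + (starRingEnd ℂ) w).re = 0 := by rw [h]; simp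
  simp [Complex.add_re] at this
  linarith

lemma rhoH_lt_one_s5 {z w : ℂ} (hz : 0 < z.re) (hw : 0 < w.re) : rhoH z w < 1 := by
  have hd := add_conj_ne_zero_s5 hz hw
  have hdpos : 0 < ‖z + (starRingEnd ℂ) w‖ := by
    simpa [norm_pos_iff] using hd
  have h1 : ‖z - w‖ < ‖z + (starRingEnd ℂ) w‖ := by
    have h2 : Complex.normSq (z - w) < Complex.normSq (z + (starRingEnd ℂ) w) := by
      have := normSq_add_conj_sub z w
      nlinarith
    have := Complex.sq_norm (z - w); have := Complex.sq_norm (z + (starRingEnd ℂ) w)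
    nlinarith [norm_nonneg (z - w), norm_nonneg (z + (starRingEnd ℂ) w)]
  rw [rhoH, norm_div]
  exact (div_lt_one hdpos).2 h1

lemma rhoH_sq (z w : ℂ) :
    rhoH z w ^ 2 = Complex.normSq (z - w) / Complex.normSq (z + (starRingEnd ℂ) w) := by
  rw [rhoH, norm_div, div_pow, Complex.sq_norm, Complex.sq_norm]

lemma rhoH_smul {c : ℝ} (hc : 0 < c) (z w : ℂ) : rhoH ((c:ℂ) * z) ((c:ℂ) * w) = rhoH z w := by
  have hc' : (c:ℂ) ≠ 0 := by exact_mod_cast hc.ne'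
  rw [rhoH, rhoH]
  congr 1
  have : (c:ℂ) * z + (starRingEnd ℂ) ((c:ℂ) * w) = (c:ℂ) * (z + (starRingEnd ℂ) w) := by
    simp [map_mul, Complex.conj_ofReal]; ring
  rw [this, ← mul_sub, mul_div_mul_left _ _ hc']

lemma dH_smul {c : ℝ} (hc : 0 < c) (z w : ℂ) : dH ((c:ℂ) * z) ((c:ℂ) * w) = dH z w := by
  rw [dH, dH, rhoH_smul hc]

lemma dH_strictMono {z w z' w' : ℂ} (h1 : rhoH z w < rhoH z' w') (h2 : rhoH z' w' < 1) :
    dH z w < dH z' w' := by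
  have h0 : 0 ≤ rhoH z w := rhoH_nonneg_s5 z w
  have hlt : (1 + rhoH z w) / (1 - rhoH z w) < (1 + rhoH z' w') / (1 - rhoH z' w') := by
    rw [div_lt_div_iff₀ (by linarith) (by linarith)]
    nlinarith
  have hpos : 0 < (1 + rhoH z w) / (1 - rhoH z w) := by
    have h3 : rhoH z w < 1 := lt_trans h1 h2
    apply div_pos <;> linarith
  have := Real.log_lt_log hpos hlt
  rw [dH, dH]; linarith

lemma rhoH_le_of_dH_le {z w z' w' : ℂ} (h1 : rhoH z w < 1) (h2 : rhoH z' w' < 1)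
    (h : dH z w ≤ dH z' w') : rhoH z w ≤ rhoH z' w' := by
  by_contra hc
  push_neg at hc
  exact absurd h (not_le.2 (dH_strictMono hc h1))

lemma normSq_polar_sub (a b x y : ℝ) :
    Complex.normSq ((a:ℂ) * Complex.exp (x * I) - (b:ℂ) * Complex.exp (y * I))
      = a^2 + b^2 - 2*a*b*Real.cos (x - y) := by
  simp [Complex.normSq_apply, Complex.sub_re, Complex.sub_im, Complex.mul_re, Complex.mul_im,
    Complex.exp_ofReal_mul_I_re, Complex.exp_ofReal_mul_I_im, Real.cos_sub]
  linear_combination a^2 * (Real.sin_sq_add_cos_sq x) + b^2 * (Real.sin_sq_add_cos_sq y)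

lemma normSq_polar_add_conj (a b x y : ℝ) :
    Complex.normSq ((a:ℂ) * Complex.exp (x * I) + (starRingEnd ℂ) ((b:ℂ) * Complex.exp (y * I)))
      = a^2 + b^2 + 2*a*b*Real.cos (x + y) := by
  simp [Complex.normSq_apply, Complex.add_re, Complex.add_im, Complex.mul_re, Complex.mul_im,
    Complex.exp_ofReal_mul_I_re, Complex.exp_ofReal_mul_I_im, Real.cos_add, Complex.conj_re,
    Complex.conj_im]
  linear_combination a^2 * (Real.sin_sq_add_cos_sq x) + b^2 * (Real.sin_sq_add_cos_sq y)

set_option maxHeartbeats 1000000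

lemma abs_cos_sub_cos_le (x y : ℝ) : |Real.cos x - Real.cos y| ≤ |x - y| := by
  rw [Real.cos_sub_cos]
  rw [abs_mul, abs_mul]
  have h1 : |Real.sin ((x+y)/2)| ≤ 1 := abs_le.2 ⟨Real.neg_one_le_sin _, Real.sin_le_one _⟩
  have h2 : |Real.sin ((x-y)/2)| ≤ |(x-y)/2| := Real.abs_sin_le_abs
  have h3 : |(-2 : ℝ)| = 2 := by norm_num
  rw [h3]
  calc 2 * |Real.sin ((x+y)/2)| * |Real.sin ((x-y)/2)|
      ≤ 2 * 1 * |(x-y)/2| := by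
        apply mul_le_mul _ h2 (abs_nonneg _) (by norm_num)
        nlinarith
    _ = |x - y| := by rw [abs_div]; norm_num; ring

set_option maxHeartbeats 1000000

lemma core1 {a b c Nw Dw Nt Dt R C c₁ : ℝ} (ha : 0 < a) (hb : 0 < b) (hcpos : 0 < c)
    (hNw : Dw - Nw = 4*a*b) (hNt : Dt - Nt = 4*a*c) (hDw_pos : 0 < Dw) (hDt_pos : 0 < Dt)
    (hDw_le : Dw ≤ 4*R^2) (hDt_ge : (R-C)^2 ≤ Dt) (hbge : R*c₁ ≤ b) (hcle : c ≤ C)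
    (key : 4*R*C < c₁*(R-C)^2) (hR : 0 < R) (hc₁ : 0 < c₁) : Nw/Dw < Nt/Dt := by
  rw [div_lt_div_iff₀ hDw_pos hDt_pos]
  have h1 : a*c*Dw ≤ a*C*(4*R^2) := by
    nlinarith [mul_le_mul_of_nonneg_left hDw_le (le_of_lt (mul_pos ha hcpos)),
      mul_le_mul_of_nonneg_right hcle (by positivity : (0:ℝ) ≤ a*(4*R^2))]
  have h2 : a*C*(4*R^2) < a*(R*c₁)*(R-C)^2 := by
    nlinarith [mul_lt_mul_of_pos_left key (mul_pos ha hR)]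
  have h3 : a*(R*c₁)*(R-C)^2 ≤ a*b*Dt := by
    nlinarith [mul_le_mul_of_nonneg_left hDt_ge (by positivity : (0:ℝ) ≤ a*(R*c₁)),
      mul_le_mul_of_nonneg_right hbge (le_of_lt (mul_pos ha hDt_pos))]
  have e1 : Nw = Dw - 4*a*b := by linarith
  have e2 : Nt = Dt - 4*a*c := by linarith
  rw [e1, e2]
  nlinarith [h1, h2, h3]

lemma core2 {lam ψ α φ c₁ δ ε : ℝ}
    (hlam : 0 < lam) (hψ : 0 < Real.cos ψ) (hcosφ : c₁ ≤ Real.cos φ) (hc₁ : 0 < c₁)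
    (hαφ : |α - φ| ≤ 2*ε) (hε : 0 ≤ ε)
    (hδ : 0 < δ) (hδ1 : δ ≤ 1) (hεc : ε ≤ c₁*δ^2/32)
    (hsqle : (1 + lam^2 - 2*lam*Real.cos (ψ - α)) * (1+1+2*Real.cos (ψ+φ))
        ≤ (1+1-2*Real.cos (ψ-φ)) * (1 + lam^2 + 2*lam*Real.cos (ψ+α))) :
    |lam - 1| < δ := by
  rw [Real.cos_sub, Real.cos_add, Real.cos_sub, Real.cos_add] at hsqle
  set Z : ℝ := (Real.cos α - Real.cos φ) + (Real.sin α * Real.cos φ - Real.cos α * Real.sin φ) * Real.sin ψ with hZdef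
  have h5 : 2*Real.cos ψ*(Real.cos φ*(lam-1)^2) ≤ 2*Real.cos ψ*(2*lam*Z) := by
    simp only [hZdef]; nlinarith [hsqle]
  have hkey : Real.cos φ*(lam-1)^2 ≤ 2*lam*Z :=
    le_of_mul_le_mul_left h5 (by positivity)
  have b1 : |Real.cos α - Real.cos φ| ≤ |α - φ| := by
    rw [Real.cos_sub_cos, abs_mul, abs_mul]
    have h1 : |Real.sin ((α+φ)/2)| ≤ 1 := abs_le.2 ⟨Real.neg_one_le_sin _, Real.sin_le_one _⟩
    have h2 : |Real.sin ((α-φ)/2)| ≤ |(α-φ)/2| := Real.abs_sin_le_abs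
    have h3 : |(-2 : ℝ)| = 2 := by norm_num
    rw [h3]
    calc 2 * |Real.sin ((α+φ)/2)| * |Real.sin ((α-φ)/2)|
        ≤ 2 * 1 * |(α-φ)/2| := by
          apply mul_le_mul _ h2 (abs_nonneg _) (by norm_num)
          nlinarith
      _ = |α - φ| := by rw [abs_div]; norm_num; ring
  have b2 : |Real.sin α * Real.cos φ - Real.cos α * Real.sin φ| ≤ |α - φ| := by
    rw [← Real.sin_sub]
    exact Real.abs_sin_le_abs
  have b3 : |Real.sin ψ| ≤ 1 := abs_le.2 ⟨Real.neg_one_le_sin _, Real.sin_le_one _⟩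
  have hZ : Z ≤ 4*ε := by
    have h1 : Real.cos α - Real.cos φ ≤ 2*ε := le_trans (le_abs_self _) (le_trans b1 hαφ)
    have h2 : (Real.sin α * Real.cos φ - Real.cos α * Real.sin φ) * Real.sin ψ ≤ 2*ε := by
      calc (Real.sin α * Real.cos φ - Real.cos α * Real.sin φ) * Real.sin ψ
          ≤ |(Real.sin α * Real.cos φ - Real.cos α * Real.sin φ) * Real.sin ψ| := le_abs_self _
        _ = |Real.sin α * Real.cos φ - Real.cos α * Real.sin φ| * |Real.sin ψ| := abs_mul _ _
        _ ≤ |α - φ| * 1 := mul_le_mul b2 b3 (abs_nonneg _) (abs_nonneg _)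
        _ ≤ 2*ε := by rw [mul_one]; exact hαφ
    simp only [hZdef]; linarith
  have h7 : c₁*(lam-1)^2 ≤ 8*lam*ε := by nlinarith [hkey, hZ, hcosφ]
  have h8 : (lam-1)^2 ≤ lam*δ^2/4 := by
    have : c₁*(lam-1)^2 ≤ c₁*(lam*δ^2/4) := by nlinarith
    exact le_of_mul_le_mul_left (by linarith) hc₁
  have hδ2 : δ^2 ≤ 1 := by nlinarith
  have hl1 : lam*δ^2 ≤ lam := by nlinarith
  have h9 : lam ≤ 3 := by nlinarith [h8, hl1]
  have h10 : (lam-1)^2 < δ^2 := by nlinarith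
  exact abs_lt.2 ⟨by nlinarith, by nlinarith⟩


lemma lt_of_sq_lt_sq {x y : ℝ} (hx : 0 ≤ x) (hy : 0 ≤ y) (h : x^2 < y^2) : x < y := by
  nlinarith

lemma le_of_sq_le_sq' {x y : ℝ} (hx : 0 ≤ x) (hy : 0 ≤ y) (h : x^2 ≤ y^2) : x ≤ y := by
  nlinarith

lemma normSq_le_of_abs_le {x : ℂ} {m : ℝ} (h : ‖x‖ ≤ m) : Complex.normSq x ≤ m^2 := by
  have h2 := Complex.sq_norm x
  nlinarith [norm_nonneg x]

lemma le_normSq_of_le_abs {x : ℂ} {m : ℝ} (h0 : 0 ≤ m) (h : m ≤ ‖x‖) :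
    m^2 ≤ Complex.normSq x := by
  have h2 := Complex.sq_norm x
  nlinarith

lemma key_lemma {R C c₁ : ℝ} (hC1 : 1 ≤ C) (hc₁ : 0 < c₁) (hR2C : 2*C+1 ≤ R)
    (h16 : 16*C < c₁*R) : 4*R*C < c₁*(R-C)^2 := by
  have hRC2 : R/2 ≤ R - C := by linarith
  have k1 : (R/2)*(R/2) ≤ (R-C)*(R-C) := mul_le_mul hRC2 hRC2 (by linarith) (by linarith)
  have k2 : c₁*((R/2)*(R/2)) ≤ c₁*((R-C)*(R-C)) := mul_le_mul_of_nonneg_left k1 (le_of_lt hc₁)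
  have k3 : 16*C*R < c₁*R*R := by nlinarith [mul_lt_mul_of_pos_right h16 (by linarith : (0:ℝ) < R)]
  nlinarith [k2, k3]

lemma proj_asymp (γ : ℝ → ℂ) (hc : ContinuousOn γ (Set.Ici 0))
    (hin : ∀ t ≥ (0:ℝ), 0 < (γ t).re)
    (hland : Tendsto (fun t : ℝ => ‖γ t‖) atTop atTop)
    (θ : ℝ) (hθ : θ ∈ Set.Ioo (-(Real.pi/2)) (Real.pi/2))
    (hslope : Tendsto (fun t : ℝ => (γ t).arg) atTop (𝓝 θ))
    (z : ℕ → ℂ) (hz : ∀ n, 0 < (z n).re)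
    (hzinf : Tendsto (fun n : ℕ => ‖z n‖) atTop atTop)
    (p : ℕ → ℂ) (hp : ∀ n, IsProjH γ (z n) (p n)) :
    ∀ δ : ℝ, 0 < δ → δ ≤ 1 → ∀ᶠ n in atTop,
      |(p n).arg - θ| < δ ∧ |‖p n‖ / ‖z n‖ - 1| < δ := by
  intro δ hδ hδ1
  have hπ : 0 < Real.pi := Real.pi_pos
  have hθabs : |θ| < Real.pi/2 := abs_lt.2 ⟨by linarith [hθ.1], hθ.2⟩
  set ε₀ : ℝ := (Real.pi/2 - |θ|)/2 with hε₀def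
  have hε₀ : 0 < ε₀ := by simp only [hε₀def]; linarith
  set c₁ : ℝ := Real.cos (|θ| + ε₀) with hc₁def
  have hc₁ : 0 < c₁ := by
    apply Real.cos_pos_of_mem_Ioo
    constructor
    · have := abs_nonneg θ; linarith
    · simp only [hε₀def]; linarith
  have hc₁le : c₁ ≤ 1 := Real.cos_le_one _
  set ε : ℝ := min ε₀ (min (δ/2) (c₁*δ^2/32)) with hεdef
  have hε : 0 < ε := by
    apply lt_min hε₀
    apply lt_min (by linarith)
    positivity
  have hεε₀ : ε ≤ ε₀ := min_le_left _ _
  have hεδ : ε ≤ δ/2 := le_trans (min_le_right _ _) (min_le_left _ _)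
  have hεc : ε ≤ c₁*δ^2/32 := le_trans (min_le_right _ _) (min_le_right _ _)
  clear_value ε
  -- cos lower bound for angles ε-close to θ
  have hcosbound : ∀ x : ℝ, |x - θ| < ε → c₁ ≤ Real.cos x := by
    intro x hx
    have h1 : |x| ≤ |θ| + ε₀ := by
      have := abs_sub_abs_le_abs_sub x θ
      linarith
    have h2 : |θ| + ε₀ ≤ Real.pi := by simp only [hε₀def]; linarith
    calc c₁ ≤ Real.cos |x| :=
          Real.cos_le_cos_of_nonneg_of_le_pi (abs_nonneg x) h2 h1
      _ = Real.cos x := Real.cos_abs x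
  -- slope control
  obtain ⟨T₁, hT₁⟩ := (Metric.tendsto_nhds.mp hslope ε hε).exists_forall_of_atTop
  set T₀ : ℝ := max T₁ 0 with hT₀def
  have hT₀0 : (0:ℝ) ≤ T₀ := le_max_right _ _
  have hslope' : ∀ t ≥ T₀, |(γ t).arg - θ| < ε := by
    intro t ht
    have := hT₁ t (le_trans (le_max_left _ _) ht)
    rwa [Real.dist_eq] at this
  -- compact bound on [0, T₀]
  obtain ⟨C₀, hC₀⟩ := (isCompact_Icc (a := (0:ℝ)) (b := T₀)).exists_bound_of_continuousOn
    (hc.mono (fun x hx => hx.1))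
  set C : ℝ := max C₀ 1 with hCdef
  have hC1 : (1:ℝ) ≤ C := le_max_right _ _
  have hC : ∀ t ∈ Set.Icc (0:ℝ) T₀, ‖γ t‖ ≤ C := by
    intro t ht
    exact le_trans (by simpa using hC₀ t ht) (le_max_left _ _)
  set M : ℝ := max (2*C + 1) (16*C/c₁ + 1) with hMdef
  have hM1 : 2*C + 1 ≤ M := le_max_left _ _
  have hM2 : 16*C/c₁ + 1 ≤ M := le_max_right _ _
  clear_value C M
  filter_upwards [hzinf.eventually_ge_atTop M] with n hn
  set R : ℝ := ‖z n‖ with hRdef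
  have hzre : 0 < (z n).re := hz n
  have hz_ne : z n ≠ 0 := fun h => by simp [h] at hzre
  have hRpos : 0 < R := by
    have h0 : (0:ℝ) < 2*C+1 := by linarith
    calc (0:ℝ) < 2*C+1 := h0
      _ ≤ M := hM1
      _ ≤ R := hn
  clear_value R
  have hR2C : 2*C + 1 ≤ R := le_trans hM1 hn
  have hR16 : 16*C/c₁ + 1 ≤ R := le_trans hM2 hn
  have hRC : C < R := by linarith
  have h16CR : 16*C < c₁ * R := by
    have h := hR16
    have : 16*C/c₁ < R := by linarith
    calc 16*C = c₁ * (16*C/c₁) := by field_simp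
      _ < c₁ * R := by exact mul_lt_mul_of_pos_left this hc₁
  -- comparison point s with |γ s| = R, s ≥ T₀
  obtain ⟨T₂, hT₂⟩ := (hland.eventually_ge_atTop R).exists_forall_of_atTop
  set T₃ : ℝ := max T₂ T₀ with hT₃def
  have hT₀T₃ : T₀ ≤ T₃ := le_max_right _ _
  have hmem : R ∈ Set.Icc (‖γ T₀‖) (‖γ T₃‖) := by
    constructor
    · exact le_of_lt (lt_of_le_of_lt (hC T₀ ⟨hT₀0, le_refl _⟩) hRC)
    · exact hT₂ T₃ (le_max_left _ _)
  have hivt := intermediate_value_Icc hT₀T₃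
    ((continuous_norm.comp_continuousOn (hc.mono (fun x hx => le_trans hT₀0 hx.1))))
  obtain ⟨s, hs_mem, hs_abs⟩ := hivt hmem
  have hsT₀ : T₀ ≤ s := hs_mem.1
  have hs0 : (0:ℝ) ≤ s := le_trans hT₀0 hsT₀
  set w : ℂ := γ s with hwdef
  have hw_re : 0 < w.re := hin s hs0
  have hw_ne : w ≠ 0 := fun h => by simp [h] at hw_re
  have habs_w : ‖w‖ = R := hs_abs
  set φ : ℝ := w.arg with hφdef
  have hφθ : |φ - θ| < ε := hslope' s hsT₀
  have hcosφ : c₁ ≤ Real.cos φ := hcosbound φ hφθ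
  have hw_re_eq : w.re = R * Real.cos φ := by
    have := Complex.cos_arg hw_ne
    rw [← hφdef] at this
    rw [this, habs_w]
    field_simp
  -- the projection data
  obtain ⟨⟨t₀, ht₀0, hpt⟩, hmin⟩ := hp n
  have hle : dH (z n) (p n) ≤ dH (z n) w := hmin s hs0
  -- Claim (i): for t in [0, T₀], dH (z n) w < dH (z n) (γ t)
  have hclaim : ∀ t ∈ Set.Icc (0:ℝ) T₀, dH (z n) w < dH (z n) (γ t) := by
    intro t ht
    have hγt_re : 0 < (γ t).re := hin t ht.1
    have hγt_abs : ‖γ t‖ ≤ C := hC t ht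
    have hρt : rhoH (z n) (γ t) < 1 := rhoH_lt_one_s5 hzre hγt_re
    apply dH_strictMono _ hρt
    apply lt_of_sq_lt_sq (rhoH_nonneg_s5 (z n) w) (rhoH_nonneg_s5 (z n) (γ t))
    rw [rhoH_sq, rhoH_sq]
    have hDw_ne : z n + (starRingEnd ℂ) w ≠ 0 := add_conj_ne_zero_s5 hzre hw_re
    have hDt_ne : z n + (starRingEnd ℂ) (γ t) ≠ 0 := add_conj_ne_zero_s5 hzre hγt_re
    have hDw_pos : 0 < Complex.normSq (z n + (starRingEnd ℂ) w) := Complex.normSq_pos.2 hDw_ne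
    have hDt_pos : 0 < Complex.normSq (z n + (starRingEnd ℂ) (γ t)) := Complex.normSq_pos.2 hDt_ne
    have hDw_le : Complex.normSq (z n + (starRingEnd ℂ) w) ≤ 4*R^2 := by
      have h1 : ‖z n + (starRingEnd ℂ) w‖ ≤ 2*R := by
        calc ‖z n + (starRingEnd ℂ) w‖
            ≤ ‖z n‖ + ‖(starRingEnd ℂ) w‖ := norm_add_le _ _
          _ = R + R := by rw [Complex.norm_conj, habs_w, ← hRdef]
          _ = 2*R := by ring
      calc Complex.normSq (z n + (starRingEnd ℂ) w) ≤ (2*R)^2 := normSq_le_of_abs_le h1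
        _ = 4*R^2 := by ring
    have hDt_ge : (R - C)^2 ≤ Complex.normSq (z n + (starRingEnd ℂ) (γ t)) := by
      have h1 : R - C ≤ ‖z n + (starRingEnd ℂ) (γ t)‖ := by
        have h3 : ‖z n‖ ≤ ‖z n + (starRingEnd ℂ) (γ t)‖ + ‖γ t‖ := by
          have h4 := norm_add_le (z n + (starRingEnd ℂ) (γ t)) (-((starRingEnd ℂ) (γ t)))
          simpa [Complex.norm_conj] using h4
        rw [hRdef]
        linarith
      exact le_normSq_of_le_abs (by linarith) h1
    have hw_re_ge : R * c₁ ≤ w.re := by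
      rw [hw_re_eq]
      exact mul_le_mul_of_nonneg_left hcosφ (le_of_lt hRpos)
    have hγt_re_le : (γ t).re ≤ C := le_trans (Complex.re_le_norm _) hγt_abs
    have key : 4 * R * C < c₁ * (R - C)^2 := key_lemma hC1 hc₁ hR2C h16CR
    exact core1 hzre hw_re hγt_re (normSq_add_conj_sub (z n) w)
      (normSq_add_conj_sub (z n) (γ t)) hDw_pos hDt_pos hDw_le hDt_ge hw_re_ge hγt_re_le
      key hRpos hc₁
  -- t₀ > T₀, hence arg control on p n
  have hT₀t : T₀ < t₀ := by
    by_contra hcon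
    push_neg at hcon
    have h1 := hclaim t₀ ⟨ht₀0, hcon⟩
    rw [← hpt] at h1
    exact absurd hle (not_le.2 h1)
  have hargp : |(p n).arg - θ| < ε := by rw [hpt]; exact hslope' t₀ (le_of_lt hT₀t)
  constructor
  · exact lt_of_lt_of_le hargp (hεδ.trans (le_of_lt (half_lt_self hδ)))
  · -- part (ii): modulus control
    have hp_re : 0 < (p n).re := by rw [hpt]; exact hin t₀ ht₀0
    have hp_ne : p n ≠ 0 := fun h => by simp [h] at hp_re
    set r : ℝ := ‖p n‖ with hrdef
    have hrpos : 0 < r := by rw [hrdef]; exact norm_pos_iff.mpr hp_ne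
    set α : ℝ := (p n).arg with hαdef
    set ψ : ℝ := (z n).arg with hψdef
    have hψlt : |ψ| < Real.pi/2 := by
      rw [hψdef]; exact Complex.abs_arg_lt_pi_div_two_iff.2 (Or.inl hzre)
    have hcosψ : 0 < Real.cos ψ := Real.cos_pos_of_mem_Ioo (Set.mem_Ioo.2 (abs_lt.1 hψlt))
    have hαlt : |α| < Real.pi/2 := by
      rw [hαdef]; exact Complex.abs_arg_lt_pi_div_two_iff.2 (Or.inl hp_re)
    have hcosα : 0 < Real.cos α := Real.cos_pos_of_mem_Ioo (Set.mem_Ioo.2 (abs_lt.1 hαlt))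
    set lam : ℝ := r / R with hlamdef
    have hlampos : 0 < lam := div_pos hrpos hRpos
    have hRne : ((R:ℝ):ℂ) ≠ 0 := by exact_mod_cast hRpos.ne'
    have hz_polar : ((R:ℝ):ℂ) * Complex.exp ((ψ:ℂ) * I) = z n := by
      rw [hψdef, hRdef]; exact Complex.norm_mul_exp_arg_mul_I (z n)
    have hp_polar : ((r:ℝ):ℂ) * Complex.exp ((α:ℂ) * I) = p n := by
      rw [hαdef, hrdef]; exact Complex.norm_mul_exp_arg_mul_I (p n)
    have hw_polar : ((R:ℝ):ℂ) * Complex.exp ((φ:ℂ) * I) = w := by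
      rw [hφdef, ← habs_w]; exact Complex.norm_mul_exp_arg_mul_I w
    have e1 : rhoH (Complex.exp ((ψ:ℂ) * I)) ((lam:ℂ) * Complex.exp ((α:ℂ) * I))
        = rhoH (z n) (p n) := by
      have h1 : ((R⁻¹:ℝ):ℂ) * (((R:ℝ):ℂ) * Complex.exp ((ψ:ℂ)*I)) = Complex.exp ((ψ:ℂ)*I) := by
        push_cast
        rw [← mul_assoc, inv_mul_cancel₀ hRne, one_mul]
      have h2 : ((R⁻¹:ℝ):ℂ) * (((r:ℝ):ℂ) * Complex.exp ((α:ℂ)*I))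
          = (lam:ℂ) * Complex.exp ((α:ℂ)*I) := by
        rw [hlamdef]; push_cast; ring
      rw [← hz_polar, ← hp_polar,
        ← rhoH_smul (inv_pos.2 hRpos) (((R:ℝ):ℂ)*Complex.exp ((ψ:ℂ)*I)) (((r:ℝ):ℂ)*Complex.exp ((α:ℂ)*I)),
        h1, h2]
    have e2 : rhoH (Complex.exp ((ψ:ℂ) * I)) (Complex.exp ((φ:ℂ) * I)) = rhoH (z n) w := by
      have h1 : ((R⁻¹:ℝ):ℂ) * (((R:ℝ):ℂ) * Complex.exp ((ψ:ℂ)*I)) = Complex.exp ((ψ:ℂ)*I) := by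
        push_cast
        rw [← mul_assoc, inv_mul_cancel₀ hRne, one_mul]
      have h2 : ((R⁻¹:ℝ):ℂ) * (((R:ℝ):ℂ) * Complex.exp ((φ:ℂ)*I)) = Complex.exp ((φ:ℂ)*I) := by
        push_cast
        rw [← mul_assoc, inv_mul_cancel₀ hRne, one_mul]
      rw [← hz_polar, ← hw_polar,
        ← rhoH_smul (inv_pos.2 hRpos) (((R:ℝ):ℂ)*Complex.exp ((ψ:ℂ)*I)) (((R:ℝ):ℂ)*Complex.exp ((φ:ℂ)*I)),
        h1, h2]
    have hρp1 : rhoH (z n) (p n) < 1 := rhoH_lt_one_s5 hzre hp_re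
    have hρw1 : rhoH (z n) w < 1 := rhoH_lt_one_s5 hzre hw_re
    have hρle : rhoH (z n) (p n) ≤ rhoH (z n) w := rhoH_le_of_dH_le hρp1 hρw1 hle
    have hsqle : rhoH (Complex.exp ((ψ:ℂ)*I)) ((lam:ℂ)*Complex.exp ((α:ℂ)*I)) ^2
        ≤ rhoH (Complex.exp ((ψ:ℂ)*I)) (Complex.exp ((φ:ℂ)*I)) ^2 := by
      rw [e1, e2]; exact pow_le_pow_left₀ (rhoH_nonneg_s5 _ _) hρle 2
    rw [rhoH_sq, rhoH_sq] at hsqle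
    have n1 : Complex.normSq (Complex.exp ((ψ:ℂ)*I) - (lam:ℂ)*Complex.exp ((α:ℂ)*I))
        = 1 + lam^2 - 2*lam*Real.cos (ψ - α) := by
      have h := normSq_polar_sub 1 lam ψ α
      simpa using h
    have d1 : Complex.normSq (Complex.exp ((ψ:ℂ)*I) + (starRingEnd ℂ) ((lam:ℂ)*Complex.exp ((α:ℂ)*I)))
        = 1 + lam^2 + 2*lam*Real.cos (ψ + α) := by
      have h := normSq_polar_add_conj 1 lam ψ α
      simpa using h
    have n2 : Complex.normSq (Complex.exp ((ψ:ℂ)*I) - Complex.exp ((φ:ℂ)*I))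
        = 1 + 1 - 2*Real.cos (ψ - φ) := by
      have h := normSq_polar_sub 1 1 ψ φ
      simpa using h
    have d2 : Complex.normSq (Complex.exp ((ψ:ℂ)*I) + (starRingEnd ℂ) (Complex.exp ((φ:ℂ)*I)))
        = 1 + 1 + 2*Real.cos (ψ + φ) := by
      have h := normSq_polar_add_conj 1 1 ψ φ
      simpa using h
    have hre1 : 0 < (Complex.exp ((ψ:ℂ)*I)).re := by
      rw [Complex.exp_ofReal_mul_I_re]; exact hcosψ
    have hre2 : 0 < ((lam:ℂ)*Complex.exp ((α:ℂ)*I)).re := by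
      have : ((lam:ℂ)*Complex.exp ((α:ℂ)*I)).re = lam * Real.cos α := by
        simp [Complex.mul_re, Complex.exp_ofReal_mul_I_re, Complex.exp_ofReal_mul_I_im]
      rw [this]; exact mul_pos hlampos hcosα
    have hre3 : 0 < (Complex.exp ((φ:ℂ)*I)).re := by
      rw [Complex.exp_ofReal_mul_I_re]; exact lt_of_lt_of_le hc₁ hcosφ
    have hd1 : 0 < (1:ℝ) + lam^2 + 2*lam*Real.cos (ψ + α) := by
      rw [← d1]; exact Complex.normSq_pos.2 (add_conj_ne_zero_s5 hre1 hre2)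
    have hd2 : 0 < (1:ℝ) + 1 + 2*Real.cos (ψ + φ) := by
      rw [← d2]; exact Complex.normSq_pos.2 (add_conj_ne_zero_s5 hre1 hre3)
    rw [n1, d1, n2, d2, div_le_div_iff₀ hd1 hd2] at hsqle
    have hαφ2 : |α - φ| ≤ 2*ε := by
      calc |α - φ| = |(α - θ) + (θ - φ)| := by congr 1; ring
        _ ≤ |α - θ| + |θ - φ| := abs_add_le _ _
        _ = |α - θ| + |φ - θ| := by rw [abs_sub_comm θ φ]
        _ ≤ ε + ε := add_le_add (le_of_lt hargp) (le_of_lt hφθ)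
        _ = 2*ε := (two_mul ε).symm
    have hfin := core2 hlampos hcosψ hcosφ hc₁ hαφ2 (le_of_lt hε) hδ hδ1 hεc
      (by exact_mod_cast hsqle)
    exact hfin

lemma tendsto_of_forall_delta {f : ℕ → ℝ} {a : ℝ}
    (h : ∀ δ : ℝ, 0 < δ → δ ≤ 1 → ∀ᶠ n in atTop, |f n - a| < δ) :
    Tendsto f atTop (𝓝 a) := by
  rw [Metric.tendsto_nhds]
  intro ε hε
  have hδ : 0 < min ε 1 := lt_min hε one_pos
  filter_upwards [h (min ε 1) hδ (min_le_right _ _)] with n hn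
  rw [Real.dist_eq]
  exact lt_of_lt_of_le hn (min_le_left _ _)

/-- projections onto curves landing at ∞ with (possibly different)
slopes θ₁, θ₂ satisfy d_ℍ(π_n¹, π_n²) → d_ℍ(e^{iθ₁}, e^{iθ₂}). -/
theorem stmt5 (γ₁ γ₂ : ℝ → ℂ)
    (h1c : ContinuousOn γ₁ (Set.Ici 0)) (h2c : ContinuousOn γ₂ (Set.Ici 0))
    (h1in : ∀ t ≥ (0:ℝ), 0 < (γ₁ t).re) (h2in : ∀ t ≥ (0:ℝ), 0 < (γ₂ t).re)
    (h1land : Tendsto (fun t : ℝ => ‖γ₁ t‖) atTop atTop)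
    (h2land : Tendsto (fun t : ℝ => ‖γ₂ t‖) atTop atTop)
    (θ₁ θ₂ : ℝ)
    (hθ₁ : θ₁ ∈ Set.Ioo (-(Real.pi/2)) (Real.pi/2))
    (hθ₂ : θ₂ ∈ Set.Ioo (-(Real.pi/2)) (Real.pi/2))
    (h1slope : Tendsto (fun t : ℝ => (γ₁ t).arg) atTop (𝓝 θ₁))
    (h2slope : Tendsto (fun t : ℝ => (γ₂ t).arg) atTop (𝓝 θ₂))
    (z : ℕ → ℂ) (hz : ∀ n, 0 < (z n).re)
    (hzinf : Tendsto (fun n : ℕ => ‖z n‖) atTop atTop)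
    (p₁ p₂ : ℕ → ℂ)
    (hp₁ : ∀ n : ℕ, IsProjH γ₁ (z n) (p₁ n))
    (hp₂ : ∀ n : ℕ, IsProjH γ₂ (z n) (p₂ n)) :
    Tendsto (fun n : ℕ => dH (p₁ n) (p₂ n)) atTop
      (𝓝 (dH (Complex.exp ((θ₁ : ℂ) * I)) (Complex.exp ((θ₂ : ℂ) * I)))) := by
  have hP1 := proj_asymp γ₁ h1c h1in h1land θ₁ hθ₁ h1slope z hz hzinf p₁ hp₁
  have hP2 := proj_asymp γ₂ h2c h2in h2land θ₂ hθ₂ h2slope z hz hzinf p₂ hp₂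
  have hp1re : ∀ n, 0 < (p₁ n).re := by
    intro n; obtain ⟨⟨t, ht0, hpt⟩, -⟩ := hp₁ n; rw [hpt]; exact h1in t ht0
  have hp2re : ∀ n, 0 < (p₂ n).re := by
    intro n; obtain ⟨⟨t, ht0, hpt⟩, -⟩ := hp₂ n; rw [hpt]; exact h2in t ht0
  have hp1ne : ∀ n, p₁ n ≠ 0 := fun n h => by have := hp1re n; rw [h] at this; simp at this
  have hp2ne : ∀ n, p₂ n ≠ 0 := fun n h => by have := hp2re n; rw [h] at this; simp at this
  have hzne : ∀ n, z n ≠ 0 := fun n h => by have := hz n; rw [h] at this; simp at this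
  -- tendsto of args and ratios, from the ∀δ statements
  have harg1 : Tendsto (fun n => (p₁ n).arg) atTop (𝓝 θ₁) :=
    tendsto_of_forall_delta (fun δ h1 h2 => (hP1 δ h1 h2).mono fun n hn => hn.1)
  have harg2 : Tendsto (fun n => (p₂ n).arg) atTop (𝓝 θ₂) :=
    tendsto_of_forall_delta (fun δ h1 h2 => (hP2 δ h1 h2).mono fun n hn => hn.1)
  have hr1 : Tendsto (fun n => ‖p₁ n‖ / ‖z n‖) atTop (𝓝 1) :=
    tendsto_of_forall_delta (fun δ h1 h2 => (hP1 δ h1 h2).mono fun n hn => hn.2)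
  have hr2 : Tendsto (fun n => ‖p₂ n‖ / ‖z n‖) atTop (𝓝 1) :=
    tendsto_of_forall_delta (fun δ h1 h2 => (hP2 δ h1 h2).mono fun n hn => hn.2)
  have hratio : Tendsto (fun n => ‖p₁ n‖ / ‖p₂ n‖) atTop (𝓝 1) := by
    have h := hr1.div hr2 one_ne_zero
    rw [div_one] at h
    apply h.congr
    intro n
    have hz0 : ‖z n‖ ≠ 0 := (norm_pos_iff.mpr (hzne n)).ne'
    have hp20 : ‖p₂ n‖ ≠ 0 := (norm_pos_iff.mpr (hp2ne n)).ne'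
    simp only [Pi.div_apply]
    field_simp
  -- rewrite dH (p₁ n) (p₂ n) in scaled polar form
  have hdeq : ∀ n, dH (p₁ n) (p₂ n)
      = dH (((‖p₁ n‖ / ‖p₂ n‖ : ℝ):ℂ) * Complex.exp (((p₁ n).arg :ℂ) * I))
           (Complex.exp (((p₂ n).arg :ℂ) * I)) := by
    intro n
    have hp20 : (0:ℝ) < ‖p₂ n‖ := norm_pos_iff.mpr (hp2ne n)
    have hp20c : ((‖p₂ n‖ : ℝ):ℂ) ≠ 0 := by exact_mod_cast hp20.ne'
    have hA : (((‖p₂ n‖)⁻¹ : ℝ):ℂ) * p₁ n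
        = ((‖p₁ n‖ / ‖p₂ n‖ : ℝ):ℂ) * Complex.exp (((p₁ n).arg :ℂ) * I) := by
      conv_lhs => rw [← Complex.norm_mul_exp_arg_mul_I (p₁ n)]
      push_cast
      ring
    have hB : (((‖p₂ n‖)⁻¹ : ℝ):ℂ) * p₂ n = Complex.exp (((p₂ n).arg :ℂ) * I) := by
      conv_lhs => arg 2; rw [← Complex.norm_mul_exp_arg_mul_I (p₂ n)]
      push_cast
      rw [← mul_assoc, inv_mul_cancel₀ hp20c, one_mul]
    rw [← hA, ← hB, dH_smul (inv_pos.2 hp20)]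
  -- limits of the two scaled sequences
  have hq1 : Tendsto (fun n => ((‖p₁ n‖ / ‖p₂ n‖ : ℝ):ℂ)
      * Complex.exp (((p₁ n).arg :ℂ) * I)) atTop (𝓝 (Complex.exp ((θ₁:ℂ) * I))) := by
    have t1 : Tendsto (fun n => ((‖p₁ n‖ / ‖p₂ n‖ : ℝ):ℂ)) atTop
        (𝓝 (1:ℂ)) := by
      have h := (Complex.continuous_ofReal.tendsto 1).comp hratio
      simpa only [Function.comp_def, Complex.ofReal_one] using h
    have t2 : Tendsto (fun n => Complex.exp (((p₁ n).arg :ℂ) * I)) atTop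
        (𝓝 (Complex.exp ((θ₁:ℂ) * I))) := by
      apply (Complex.continuous_exp.tendsto _).comp
      exact (((Complex.continuous_ofReal.tendsto θ₁).comp harg1).mul_const I)
    have := t1.mul t2
    simpa using this
  have hq2 : Tendsto (fun n => Complex.exp (((p₂ n).arg :ℂ) * I)) atTop
      (𝓝 (Complex.exp ((θ₂:ℂ) * I))) := by
    apply (Complex.continuous_exp.tendsto _).comp
    exact (((Complex.continuous_ofReal.tendsto θ₂).comp harg2).mul_const I)
  -- continuity of dH at the limit pair
  have hE1re : 0 < (Complex.exp ((θ₁:ℂ) * I)).re := by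
    rw [Complex.exp_ofReal_mul_I_re]
    exact Real.cos_pos_of_mem_Ioo (Set.mem_Ioo.2 ⟨hθ₁.1, hθ₁.2⟩)
  have hE2re : 0 < (Complex.exp ((θ₂:ℂ) * I)).re := by
    rw [Complex.exp_ofReal_mul_I_re]
    exact Real.cos_pos_of_mem_Ioo (Set.mem_Ioo.2 ⟨hθ₂.1, hθ₂.2⟩)
  have hρcont : ContinuousAt (fun w : ℂ × ℂ => rhoH w.1 w.2)
      (Complex.exp ((θ₁:ℂ) * I), Complex.exp ((θ₂:ℂ) * I)) := by
    apply continuous_norm.continuousAt.comp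
    apply ContinuousAt.div
    · exact (continuous_fst.sub continuous_snd).continuousAt
    · exact (continuous_fst.add (Complex.continuous_conj.comp continuous_snd)).continuousAt
    · exact add_conj_ne_zero_s5 hE1re hE2re
  have hρlt : rhoH (Complex.exp ((θ₁:ℂ) * I)) (Complex.exp ((θ₂:ℂ) * I)) < 1 :=
    rhoH_lt_one_s5 hE1re hE2re
  have hρge : 0 ≤ rhoH (Complex.exp ((θ₁:ℂ) * I)) (Complex.exp ((θ₂:ℂ) * I)) := rhoH_nonneg_s5 _ _
  have hdcont : ContinuousAt (fun w : ℂ × ℂ => dH w.1 w.2)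
      (Complex.exp ((θ₁:ℂ) * I), Complex.exp ((θ₂:ℂ) * I)) := by
    simp only [dH]
    apply ContinuousAt.mul continuousAt_const
    apply ContinuousAt.comp (Real.continuousAt_log _)
    · exact (continuousAt_const.add hρcont).div (continuousAt_const.sub hρcont) (by linarith)
    · exact ne_of_gt (div_pos (by linarith) (by linarith))
  have hfinal := hdcont.tendsto.comp (hq1.prodMk_nhds hq2)
  exact Tendsto.congr (fun n => (hdeq n).symm) hfinal
end

section
/- Let γ : [0,∞) → ℍ be a continuous curve landing at ∞ such that arg(γ(t)) → θ as t → ∞ for some θ ∈ (−π/2, π/2). If {z_n} ⊂ ℍ is a sequence with |z_n| → ∞ and, for each n, π_n is a projection of z_n onto γ, then |π_n| → ∞ as n → ∞. -/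
open Complex Filter Topology

lemma key_sq (z w : ℂ) :
    (‖z + (starRingEnd ℂ) w‖)^2 - (‖z - w‖)^2 = 4 * z.re * w.re := by
  rw [Complex.sq_norm, Complex.sq_norm]
  simp [Complex.normSq_apply, Complex.add_re, Complex.add_im, Complex.sub_re, Complex.sub_im]
  ring

lemma denom_pos (z w : ℂ) (hz : 0 < z.re) (hw : 0 < w.re) :
    0 < ‖z + (starRingEnd ℂ) w‖ := by
  rw [norm_pos_iff]
  intro h
  have : (z + (starRingEnd ℂ) w).re = 0 := by rw [h]; simp
  simp [Complex.add_re] at this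
  linarith

lemma rho_facts (z w : ℂ) (hz : 0 < z.re) (hw : 0 < w.re) :
    0 ≤ rhoH z w ∧ rhoH z w < 1 ∧
    1 - (rhoH z w)^2 = 4 * z.re * w.re / (‖z + (starRingEnd ℂ) w‖)^2 := by
  have hB := denom_pos z w hz hw
  have hK := key_sq z w
  have hrho : rhoH z w = ‖z - w‖ / ‖z + (starRingEnd ℂ) w‖ := by
    unfold rhoH; rw [norm_div]
  refine ⟨by unfold rhoH; exact norm_nonneg _, ?_, ?_⟩
  · rw [hrho, div_lt_one hB]
    nlinarith [norm_nonneg (z - w), norm_nonneg (z + (starRingEnd ℂ) w)]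
  · rw [hrho, div_pow]
    field_simp
    linarith [hK]


lemma arith1 (ρ X D : ℝ) (h0 : 0 ≤ ρ) (h1 : ρ < 1) (hX : 0 ≤ X) (hD : 0 < D)
    (hkey : (1 - ρ^2) * X ≤ D) : X / D ≤ (1 + ρ)/(1 - ρ) := by
  rw [div_le_div_iff₀ hD (by linarith)]
  nlinarith [mul_nonneg (mul_nonneg h0 (by linarith : (0:ℝ) ≤ 1 - ρ)) hX,
    mul_nonneg h0 hD.le]

lemma arith2 (ρ r E : ℝ) (h0 : 0 ≤ ρ) (h1 : ρ < 1) (hr : 0 < r) (hE : 0 < E)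
    (hlb : E ≤ 2*r*((1 - ρ)*(1 + ρ))) : (1 + ρ)/(1 - ρ) ≤ 8*r/E := by
  rw [div_le_div_iff₀ (by linarith) hE]
  nlinarith [mul_le_mul_of_nonneg_left hlb (by linarith : (0:ℝ) ≤ 1 + ρ),
    mul_nonneg (mul_nonneg hr.le (sq_nonneg (1 - ρ))) (by linarith : (0:ℝ) ≤ 3 + ρ)]

lemma arith3 (r M a c : ℝ) (ha : 0 < a) (hc : 0 < c) (hM : 1 ≤ M) (h2M : 2*M ≤ r)
    (hrc : 129*M ≤ r*c) (hfin : (r - M)^2 * (a*c) ≤ 8*r*(4*a*M)) : False := by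
  have hr : 0 < r := by linarith
  have e9 : (0:ℝ) ≤ a*c*(r/2 - M)*(3*r/2 - M) :=
    mul_nonneg (mul_nonneg (mul_nonneg ha.le hc.le) (by linarith)) (by linarith)
  have e10 : 129*M*(r*a) ≤ (r*c)*(r*a) :=
    mul_le_mul_of_nonneg_right hrc (mul_pos hr ha).le
  have e11 : (0:ℝ) < r*a*M := mul_pos (mul_pos hr ha) (by linarith)
  nlinarith [hfin, e9, e10, e11]

lemma arith4 (a c r Bw wre : ℝ) (ha : 0 < a) (hc : 0 < c) (hr : 0 < r)
    (hBw2 : Bw^2 ≤ 4*r^2) (hw : r*(c/2) ≤ wre) : a*c*Bw^2 ≤ 2*r*(4*a*wre) := by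
  nlinarith [mul_nonneg (mul_nonneg ha.le hc.le) (by linarith : (0:ℝ) ≤ 4*r^2 - Bw^2),
    mul_nonneg (by positivity : (0:ℝ) ≤ 8*r*a) (by linarith : (0:ℝ) ≤ wre - r*(c/2))]

/-- projections onto a curve landing at ∞ non-tangentially of a
sequence tending to ∞ also tend to ∞. -/
theorem stmt6 (γ : ℝ → ℂ)
    (hγc : ContinuousOn γ (Set.Ici 0))
    (hγin : ∀ t ≥ (0:ℝ), 0 < (γ t).re)
    (hland : Tendsto (fun t : ℝ => ‖γ t‖) atTop atTop)
    (θ : ℝ) (hθ : θ ∈ Set.Ioo (-(Real.pi/2)) (Real.pi/2))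
    (hslope : Tendsto (fun t : ℝ => (γ t).arg) atTop (𝓝 θ))
    (z : ℕ → ℂ) (hz : ∀ n, 0 < (z n).re)
    (hzinf : Tendsto (fun n : ℕ => ‖z n‖) atTop atTop)
    (p : ℕ → ℂ) (hp : ∀ n : ℕ, IsProjH γ (z n) (p n)) :
    Tendsto (fun n : ℕ => ‖p n‖) atTop atTop := by
  rw [tendsto_atTop_atTop]
  intro b
  set M : ℝ := max b 1 with hMdef
  have hM1 : (1:ℝ) ≤ M := le_max_right _ _
  have hMb : b ≤ M := le_max_left _ _
  have hc : 0 < Real.cos θ := Real.cos_pos_of_mem_Ioo hθ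
  set c := Real.cos θ with hcdef
  -- choose T beyond which cos(arg γ t) ≥ c/2
  have hcos : Tendsto (fun t => Real.cos ((γ t).arg)) atTop (𝓝 c) :=
    (Real.continuous_cos.tendsto θ).comp hslope
  have hev : ∀ᶠ t in atTop, c/2 ≤ Real.cos ((γ t).arg) :=
    hcos.eventually (eventually_ge_nhds (by linarith))
  obtain ⟨T0, hT0⟩ := eventually_atTop.mp hev
  set T : ℝ := max T0 0 with hTdef
  have hTnn : (0:ℝ) ≤ T := le_max_right _ _
  have hT0' : ∀ t ≥ T, c/2 ≤ Real.cos ((γ t).arg) :=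
    fun t ht => hT0 t (le_trans (le_max_left _ _) ht)
  set R1 : ℝ := max (max (2*M) (‖γ T‖)) (129*M/c) with hR1def
  obtain ⟨N, hN⟩ := eventually_atTop.mp (hzinf.eventually_ge_atTop R1)
  refine ⟨N, fun n hn => ?_⟩
  have hr := hN n hn
  set r : ℝ := ‖z n‖ with hrdef
  set a : ℝ := (z n).re with hadef
  have ha : 0 < a := hz n
  have hr2M : 2*M ≤ r := le_trans (le_trans (le_max_left _ _) (le_max_left _ _)) hr
  have hrT : ‖γ T‖ ≤ r := le_trans (le_trans (le_max_right _ _) (le_max_left _ _)) hr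
  have hrc : 129*M/c ≤ r := le_trans (le_max_right _ _) hr
  have hrc' : 129*M ≤ r*c := (div_le_iff₀ hc).mp hrc
  have hr0 : 0 < r := by linarith
  -- find a curve point of modulus exactly r, past T
  obtain ⟨t1, ht1r, ht1T⟩ := ((hland.eventually_ge_atTop r).and (eventually_ge_atTop T)).exists
  have hsub : Set.Icc T t1 ⊆ Set.Ici (0:ℝ) := fun x hx => le_trans hTnn hx.1
  have hcont : ContinuousOn (fun t => ‖γ t‖) (Set.Icc T t1) :=
    continuous_norm.comp_continuousOn (hγc.mono hsub)
  have hrmem : r ∈ Set.Icc (‖γ T‖) (‖γ t1‖) := ⟨hrT, ht1r⟩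
  obtain ⟨t, htmem, htval⟩ := intermediate_value_Icc ht1T hcont hrmem
  have htT : T ≤ t := htmem.1
  have ht0 : (0:ℝ) ≤ t := le_trans hTnn htT
  set w : ℂ := γ t with hwdef
  have hwre : 0 < w.re := hγin t ht0
  have hwabs : ‖w‖ = r := htval
  have hwne : w ≠ 0 := by
    intro h; rw [h] at hwre; simp at hwre
  have hwre2 : r * (c/2) ≤ w.re := by
    have h1 := hT0' t htT
    have h2 : Real.cos w.arg = w.re / ‖w‖ := Complex.cos_arg hwne
    rw [h2, hwabs] at h1
    calc r * (c/2) = (c/2) * r := by ring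
    _ ≤ (w.re / r) * r := by apply mul_le_mul_of_nonneg_right h1 hr0.le
    _ = w.re := by field_simp
  -- projection facts
  obtain ⟨⟨s, hs0, hps⟩, hmin⟩ := hp n
  have hpre : 0 < (p n).re := by rw [hps]; exact hγin s hs0
  by_contra hb
  push_neg at hb
  have hpM : ‖p n‖ ≤ M := le_trans hb.le hMb
  have hd : dH (z n) (p n) ≤ dH (z n) w := hmin t ht0
  -- rho facts
  obtain ⟨hρp0, hρp1, hρpsq⟩ := rho_facts (z n) (p n) ha hpre
  obtain ⟨hρw0, hρw1, hρwsq⟩ := rho_facts (z n) w ha hwre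
  set ρp := rhoH (z n) (p n) with hρpdef
  set ρw := rhoH (z n) w with hρwdef
  have hXp : (0:ℝ) < (1 + ρp) / (1 - ρp) := div_pos (by linarith) (by linarith)
  have hXw : (0:ℝ) < (1 + ρw) / (1 - ρw) := div_pos (by linarith) (by linarith)
  have hratio : (1 + ρp) / (1 - ρp) ≤ (1 + ρw) / (1 - ρw) := by
    unfold dH at hd
    have hlog : Real.log ((1 + ρp) / (1 - ρp)) ≤ Real.log ((1 + ρw) / (1 - ρw)) := by
      linarith
    exact (Real.log_le_log_iff hXp hXw).mp hlog
  -- norm bounds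
  set Bp : ℝ := ‖z n + (starRingEnd ℂ) (p n)‖ with hBpdef
  set Bw : ℝ := ‖z n + (starRingEnd ℂ) w‖ with hBwdef
  have hBp0 : 0 < Bp := denom_pos _ _ ha hpre
  have hBw0 : 0 < Bw := denom_pos _ _ ha hwre
  have hBp_ge : r - M ≤ Bp := by
    have h1 : ‖z n‖ ≤ Bp + ‖p n‖ := by
      have h2 := norm_add_le (z n + (starRingEnd ℂ) (p n)) (-(starRingEnd ℂ) (p n))
      simpa using h2
    linarith
  have hBw_le : Bw ≤ 2*r := by
    have h2 := norm_add_le (z n) ((starRingEnd ℂ) w)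
    have h3 : ‖(starRingEnd ℂ) w‖ = r := by
      rw [Complex.norm_conj]; exact hwabs
    rw [h3] at h2
    have h4 : ‖z n‖ = r := hrdef.symm
    linarith [h2, h4.le, h4.ge]
  have hrM : M < r := by linarith
  have hpreM : (p n).re ≤ M := le_trans (Complex.re_le_norm _) hpM
  -- lower bound for Xp
  have hBp2 : (r - M)^2 ≤ Bp^2 := by
    have := pow_le_pow_left₀ (by linarith : (0:ℝ) ≤ r - M) hBp_ge 2
    simpa using this
  have hkey : (1 - ρp^2) * (r - M)^2 ≤ 4*a*M := by
    rw [hρpsq]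
    rw [div_mul_eq_mul_div, div_le_iff₀ (by positivity)]
    have h5 : (p n).re * (r - M)^2 ≤ M * Bp^2 :=
      mul_le_mul hpreM hBp2 (sq_nonneg _) (by linarith)
    calc 4*a*(p n).re * (r - M)^2 = 4*a*((p n).re * (r - M)^2) := by ring
      _ ≤ 4*a*(M * Bp^2) := mul_le_mul_of_nonneg_left h5 (by positivity)
      _ = 4*a*M*Bp^2 := by ring
  have hlower : (r - M)^2 / (4*a*M) ≤ (1 + ρp) / (1 - ρp) :=
    arith1 ρp ((r - M)^2) (4*a*M) hρp0 hρp1 (sq_nonneg _) (by positivity) hkey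
  -- upper bound for Xw
  have hBw2 : Bw^2 ≤ 4*r^2 := by
    have := pow_le_pow_left₀ hBw0.le hBw_le 2
    calc Bw^2 ≤ (2*r)^2 := this
      _ = 4*r^2 := by ring
  have hlb : a*c ≤ 2*r*((1 - ρw)*(1 + ρw)) := by
    have h4 : 2*r*((1 - ρw)*(1 + ρw)) = 2*r*(1 - ρw^2) := by ring
    rw [h4, hρwsq]
    have h7 : 2*r*(4*a*w.re/Bw^2) = 2*r*(4*a*w.re)/Bw^2 := by ring
    rw [h7, le_div_iff₀ (by positivity)]
    exact arith4 a c r Bw w.re ha hc hr0 hBw2 hwre2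
  have hupper : (1 + ρw) / (1 - ρw) ≤ 8*r / (a*c) :=
    arith2 ρw r (a*c) hρw0 hρw1 hr0 (by positivity) hlb
  -- combine
  have hfinal : (r - M)^2 / (4*a*M) ≤ 8*r / (a*c) :=
    le_trans hlower (le_trans hratio hupper)
  rw [div_le_div_iff₀ (by positivity) (by positivity)] at hfinal
  exact arith3 r M a c ha hc hM1 hr2M hrc' hfinal
end
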